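/- Let G=(V,E) be a connected locally finite graph with μ(x) ≥ μ_min > 0, let a:V→[0,∞) with a(x) → +∞ as d(x,x₀) → ∞ for some fixed x₀, and let λ > 1. If {u_k} is a sequence bounded in the norm ‖u‖²_{E_λ} = ∫_V(|Δu|²+|∇u|²+(λa+1)u²)dμ, then up to a subsequence there exists u with u_k → u in L^q(V) for every q ∈ [2,∞] and u_k(x) → u(x) for every x ∈ V. -/

import Mathlib

open Filter Topology

structure GraphData (V : Type*) where
  ω : V → V → ℝ
  μ : V → ℝ
  sym : ∀ x y, ω x y = ω y x
  nonneg : ∀ x y, 0 ≤ ω x y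
  loopless : ∀ x, ω x x = 0
  locfin : ∀ x, {y | ω x y ≠ 0}.Finite
  μpos : ∀ x, 0 < μ x

variable {V : Type*}

noncomputable def GraphData.lap (g : GraphData V) (u : V → ℝ) (x : V) : ℝ :=
  (1 / g.μ x) * ∑' y, g.ω x y * (u y - u x)

noncomputable def GraphData.grad (g : GraphData V) (u v : V → ℝ) (x : V) : ℝ :=
  (1 / (2 * g.μ x)) * ∑' y, g.ω x y * (u y - u x) * (v y - v x)

noncomputable def GraphData.integral (g : GraphData V) (f : V → ℝ) : ℝ :=
  ∑' x, g.μ x * f x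

def GraphData.G (g : GraphData V) : SimpleGraph V where
  Adj x y := 0 < g.ω x y
  symm := ⟨fun x y (h : 0 < g.ω x y) => by show 0 < g.ω y x; rwa [g.sym y x]⟩
  loopless := ⟨fun x (h : 0 < g.ω x x) => by simp [g.loopless x] at h⟩

noncomputable def GraphData.enormSq (g : GraphData V) (a : V → ℝ) (lam : ℝ) (u : V → ℝ) : ℝ :=
  ∑' x, g.μ x * ((g.lap u x) ^ 2 + g.grad u u x + (lam * a x + 1) * (u x) ^ 2)

def GraphData.memE (g : GraphData V) (a : V → ℝ) (lam : ℝ) (u : V → ℝ) : Prop :=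
  Summable fun x => g.μ x * ((g.lap u x) ^ 2 + g.grad u u x + (lam * a x + 1) * (u x) ^ 2)

noncomputable def GraphData.lpInt (g : GraphData V) (p : ℝ) (u : V → ℝ) : ℝ :=
  ∑' x, g.μ x * |u x| ^ p

noncomputable def GraphData.Jlam (g : GraphData V) (a : V → ℝ) (lam p : ℝ) (u : V → ℝ) : ℝ :=
  (1 / 2) * g.enormSq a lam u - (1 / p) * g.lpInt p u

def GraphData.Nehari (g : GraphData V) (a : V → ℝ) (lam p : ℝ) : Set (V → ℝ) :=
  {u | u ≠ 0 ∧ g.memE a lam u ∧ g.enormSq a lam u = g.lpInt p u}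

noncomputable def GraphData.Jderiv (g : GraphData V) (a : V → ℝ) (lam p : ℝ) (u φ : V → ℝ) : ℝ :=
  (∑' x, g.μ x * (g.lap u x * g.lap φ x + g.grad u φ x + (lam * a x + 1) * u x * φ x))
    - ∑' x, g.μ x * (|u x| ^ (p - 2) * u x * φ x)

def GraphData.bdry (g : GraphData V) (Ω : Set V) : Set V :=
  {y | y ∉ Ω ∧ ∃ x ∈ Ω, 0 < g.ω x y}

noncomputable def GraphData.hnormSq (g : GraphData V) (Ω : Set V) (u : V → ℝ) : ℝ :=
  (∑' x : ↥(Ω ∪ g.bdry Ω), g.μ x * ((g.lap u x) ^ 2 + g.grad u u x))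
    + ∑' x : Ω, g.μ x * (u x) ^ 2

noncomputable def GraphData.lpIntO (g : GraphData V) (Ω : Set V) (p : ℝ) (u : V → ℝ) : ℝ :=
  ∑' x : Ω, g.μ x * |u x| ^ p

noncomputable def GraphData.JOmega (g : GraphData V) (Ω : Set V) (p : ℝ) (u : V → ℝ) : ℝ :=
  (1 / 2) * g.hnormSq Ω u - (1 / p) * g.lpIntO Ω p u

def GraphData.memH (g : GraphData V) (Ω : Set V) (u : V → ℝ) : Prop :=
  ∀ x ∉ Ω, u x = 0

def GraphData.NehariO (g : GraphData V) (Ω : Set V) (p : ℝ) : Set (V → ℝ) :=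
  {u | u ≠ 0 ∧ g.memH Ω u ∧ g.hnormSq Ω u = g.lpIntO Ω p u}

noncomputable def GraphData.JderivO (g : GraphData V) (Ω : Set V) (p : ℝ) (u φ : V → ℝ) : ℝ :=
  (∑' x : ↥(Ω ∪ g.bdry Ω), g.μ x * (g.lap u x * g.lap φ x + g.grad u φ x))
    + (∑' x : Ω, g.μ x * (u x * φ x))
    - ∑' x : Ω, g.μ x * (|u x| ^ (p - 2) * u x * φ x)

private lemma grad_nonneg' (g : GraphData V) (u : V → ℝ) (x : V) : 0 ≤ g.grad u u x := by
  unfold GraphData.grad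
  apply mul_nonneg
  · have := g.μpos x; positivity
  · apply tsum_nonneg
    intro y
    rw [mul_assoc]
    exact mul_nonneg (g.nonneg x y) (mul_self_nonneg _)

private lemma lap_finsum (g : GraphData V) (u : V → ℝ) (x : V) :
    g.lap u x = (1 / g.μ x) * ∑ y ∈ (g.locfin x).toFinset, g.ω x y * (u y - u x) := by
  classical
  unfold GraphData.lap
  congr 1
  refine tsum_eq_sum (fun y hy => ?_)
  have : g.ω x y = 0 := by
    by_contra h
    exact hy ((g.locfin x).mem_toFinset.mpr h)
  simp [this]

private lemma grad_finsum (g : GraphData V) (u v : V → ℝ) (x : V) :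
    g.grad u v x = (1 / (2 * g.μ x)) * ∑ y ∈ (g.locfin x).toFinset,
      g.ω x y * (u y - u x) * (v y - v x) := by
  classical
  unfold GraphData.grad
  congr 1
  refine tsum_eq_sum (fun y hy => ?_)
  have : g.ω x y = 0 := by
    by_contra h
    exact hy ((g.locfin x).mem_toFinset.mpr h)
  simp [this]

private lemma lap_tendsto' (g : GraphData V) (u : ℕ → V → ℝ) (w : V → ℝ)
    (h : ∀ y, Tendsto (fun k => u k y) atTop (𝓝 (w y))) (x : V) :
    Tendsto (fun k => g.lap (u k) x) atTop (𝓝 (g.lap w x)) := by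
  classical
  simp only [lap_finsum]
  exact (tendsto_finset_sum _ (fun y _ =>
    (tendsto_const_nhds.mul ((h y).sub (h x))))).const_mul _

private lemma grad_tendsto' (g : GraphData V) (u : ℕ → V → ℝ) (w : V → ℝ)
    (h : ∀ y, Tendsto (fun k => u k y) atTop (𝓝 (w y))) (x : V) :
    Tendsto (fun k => g.grad (u k) (u k) x) atTop (𝓝 (g.grad w w x)) := by
  classical
  simp only [grad_finsum]
  exact (tendsto_finset_sum _ (fun y _ =>
    ((tendsto_const_nhds.mul ((h y).sub (h x))).mul ((h y).sub (h x))))).const_mul _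

private lemma ball_finite' (g : GraphData V) (hconn : g.G.Connected) (x₀ : V) :
    ∀ n : ℕ, {x : V | g.G.dist x x₀ ≤ n}.Finite := by
  intro n
  induction n with
  | zero =>
    apply Set.Finite.subset (Set.finite_singleton x₀)
    intro x hx
    simp only [Set.mem_setOf_eq, Nat.le_zero] at hx
    exact (hconn.dist_eq_zero_iff).mp hx
  | succ n ih =>
    apply Set.Finite.subset (ih.union (Set.Finite.biUnion ih (fun y _ => g.locfin y)))
    intro x hx
    simp only [Set.mem_setOf_eq] at hx
    by_cases h : g.G.dist x x₀ ≤ n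
    · exact Or.inl h
    · right
      obtain ⟨p, hp⟩ := (hconn x x₀).exists_walk_length_eq_dist
      cases p with
      | nil => simp at hp; rw [SimpleGraph.dist_self] at h; omega
      | @cons _ y _ hadj q =>
        simp only [SimpleGraph.Walk.length_cons] at hp
        refine Set.mem_biUnion (show g.G.dist y x₀ ≤ n from ?_) (show g.ω y x ≠ 0 from ?_)
        · have := SimpleGraph.dist_le q
          omega
        · rw [g.sym y x]
          exact ne_of_gt hadj
/- STATEMENT 4: compactness of the embedding E_λ ↪ L^q(V). -/
set_option maxHeartbeats 2000000 in
/-- compactness of the embedding E_λ ↪ L^q(V). -/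
theorem stmt4 (g : GraphData V) (μmin C lam : ℝ) (hμmin : 0 < μmin)
    (hμ : ∀ x, μmin ≤ g.μ x) (hω : ∀ x, ∑' y, g.ω x y ≤ C)
    (hconn : g.G.Connected) (a : V → ℝ) (ha : ∀ x, 0 ≤ a x) (x₀ : V)
    (hainf : ∀ M : ℝ, ∃ R : ℕ, ∀ x, R ≤ g.G.dist x x₀ → M ≤ a x)
    (hlam : 1 < lam)
    (u : ℕ → V → ℝ) (hmem : ∀ k, g.memE a lam (u k))
    (B : ℝ) (hB : ∀ k, g.enormSq a lam (u k) ≤ B) :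
    ∃ φ : ℕ → ℕ, StrictMono φ ∧ ∃ w : V → ℝ, g.memE a lam w ∧
      (∀ x, Filter.Tendsto (fun k => u (φ k) x) Filter.atTop (nhds (w x)))
      ∧ (∀ q : ℝ, 2 ≤ q →
          Filter.Tendsto (fun k => ∑' x, g.μ x * |u (φ k) x - w x| ^ q)
            Filter.atTop (nhds 0))
      ∧ Filter.Tendsto (fun k => ⨆ x, |u (φ k) x - w x|) Filter.atTop (nhds 0) := by
  classical
  have hlam0 : (0:ℝ) < lam := lt_trans one_pos hlam
  set F : (V → ℝ) → V → ℝ := fun v x =>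
    g.μ x * ((g.lap v x) ^ 2 + g.grad v v x + (lam * a x + 1) * (v x) ^ 2) with hF
  have hFnn : ∀ v x, 0 ≤ F v x := by
    intro v x
    apply mul_nonneg (g.μpos x).le
    have h1 := grad_nonneg' g v x
    have h2 : 0 ≤ lam * a x := mul_nonneg hlam0.le (ha x)
    nlinarith [sq_nonneg (g.lap v x), sq_nonneg (v x)]
  have hmem' : ∀ k, Summable (F (u k)) := hmem
  have hB' : ∀ k, ∑' x, F (u k) x ≤ B := hB
  have hB0 : 0 ≤ B := le_trans (tsum_nonneg (hFnn (u 0))) (hB' 0)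
  -- single term bound (quadratic part)
  have hGle : ∀ (v : V → ℝ) x, g.μ x * ((lam * a x + 1) * (v x) ^ 2) ≤ F v x := by
    intro v x
    have h1 := grad_nonneg' g v x
    simp only [hF]
    nlinarith [sq_nonneg (g.lap v x), (g.μpos x).le]
  have hGnn : ∀ (v : V → ℝ) x, 0 ≤ g.μ x * ((lam * a x + 1) * (v x) ^ 2) := by
    intro v x
    have h2 : 0 ≤ lam * a x := mul_nonneg hlam0.le (ha x)
    have := (g.μpos x).le
    positivity
  have hterm : ∀ k x, g.μ x * ((lam * a x + 1) * (u k x) ^ 2) ≤ B := fun k x =>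
    le_trans (hGle (u k) x) (le_trans (Summable.le_tsum (hmem' k) x (fun y _ => hFnn _ y)) (hB' k))
  set M0 := Real.sqrt (B / μmin) with hM0def
  have hM0 : ∀ k x, |u k x| ≤ M0 := by
    intro k x
    apply Real.abs_le_sqrt
    rw [le_div_iff₀ hμmin]
    have h1 := hterm k x
    have e1 : μmin * (u k x) ^ 2 ≤ g.μ x * (u k x) ^ 2 :=
      mul_le_mul_of_nonneg_right (hμ x) (sq_nonneg _)
    have e2 : g.μ x * (u k x) ^ 2 ≤ g.μ x * ((lam * a x + 1) * (u k x) ^ 2) := by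
      nlinarith [mul_nonneg (mul_nonneg (g.μpos x).le (mul_nonneg hlam0.le (ha x)))
        (sq_nonneg (u k x))]
    linarith
  -- countability of V
  have hball := ball_finite' g hconn x₀
  haveI hcount : Countable V := by
    apply Set.countable_univ_iff.mp
    refine (Set.countable_iUnion (fun n => (hball n).countable)).mono (fun x _ => ?_)
    exact Set.mem_iUnion.mpr ⟨g.G.dist x x₀, Set.mem_setOf_eq ▸ le_rfl⟩
  -- compactness
  have hcpt : IsCompact (Set.univ.pi (fun _ : V => Set.Icc (-M0) M0)) :=
    isCompact_univ_pi (fun _ => isCompact_Icc)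
  obtain ⟨w, hwmem, φ, hφ, hconv⟩ := hcpt.tendsto_subseq (x := fun k => u k)
    (fun k => Set.mem_univ_pi.mpr (fun x => Set.mem_Icc.mpr (abs_le.mp (hM0 k x))))
  have hpt : ∀ x, Tendsto (fun k => u (φ k) x) atTop (𝓝 (w x)) := tendsto_pi_nhds.mp hconv
  have hwabs : ∀ x, |w x| ≤ M0 := fun x =>
    abs_le.mpr (Set.mem_Icc.mp (Set.mem_univ_pi.mp hwmem x))
  -- convergence of F terms
  have hFc : ∀ x, Tendsto (fun k => F (u (φ k)) x) atTop (𝓝 (F w x)) := by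
    intro x
    refine tendsto_const_nhds.mul ?_
    exact (((lap_tendsto' g _ w hpt x).pow 2).add (grad_tendsto' g _ w hpt x)).add
      (tendsto_const_nhds.mul ((hpt x).pow 2))
  have hFsumw : ∀ s : Finset V, ∑ x ∈ s, F w x ≤ B := by
    intro s
    refine le_of_tendsto (tendsto_finset_sum s (fun x _ => hFc x)) ?_
    filter_upwards with k
    exact le_trans (Summable.sum_le_tsum s (fun x _ => hFnn _ x) (hmem' (φ k))) (hB' (φ k))
  have hwE : Summable (F w) := summable_of_sum_le (fun x => hFnn w x) hFsumw
  -- quadratic partial sums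
  have hGB : ∀ k (s : Finset V), ∑ x ∈ s, g.μ x * ((lam * a x + 1) * (u k x) ^ 2) ≤ B :=
    fun k s => le_trans (Finset.sum_le_sum (fun x _ => hGle (u k) x))
      (le_trans (Summable.sum_le_tsum s (fun x _ => hFnn _ x) (hmem' k)) (hB' k))
  have hGBw : ∀ s : Finset V, ∑ x ∈ s, g.μ x * ((lam * a x + 1) * (w x) ^ 2) ≤ B :=
    fun s => le_trans (Finset.sum_le_sum (fun x _ => hGle w x)) (hFsumw s)
  have hGwterm : ∀ x, g.μ x * ((lam * a x + 1) * (w x) ^ 2) ≤ B := by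
    intro x
    have := hGBw {x}
    simpa using this
  have hsumG : ∀ k, Summable (fun x => g.μ x * ((lam * a x + 1) * (u k x) ^ 2)) :=
    fun k => Summable.of_nonneg_of_le (hGnn (u k)) (hGle (u k)) (hmem' k)
  have hsumGw : Summable (fun x => g.μ x * ((lam * a x + 1) * (w x) ^ 2)) :=
    Summable.of_nonneg_of_le (hGnn w) (hGle w) hwE
  -- pointwise quadratic comparison for differences
  have hDle : ∀ k x, g.μ x * (u k x - w x) ^ 2 ≤
      2 * (g.μ x * ((lam * a x + 1) * (u k x) ^ 2) + g.μ x * ((lam * a x + 1) * (w x) ^ 2)) := by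
    intro k x
    have h3 : (1:ℝ) ≤ lam * a x + 1 := by nlinarith [ha x]
    nlinarith [sq_nonneg (u k x + w x), sq_nonneg (u k x - w x), (g.μpos x).le,
      sq_nonneg (u k x), sq_nonneg (w x), mul_nonneg (g.μpos x).le (sq_nonneg (u k x)),
      mul_nonneg (g.μpos x).le (sq_nonneg (w x))]
  have hsumD : ∀ k, Summable (fun x => g.μ x * (u k x - w x) ^ 2) := by
    intro k
    refine Summable.of_nonneg_of_le (fun x => mul_nonneg (g.μpos x).le (sq_nonneg _))
      (hDle k) ?_
    exact (((hsumG k).add hsumGw).mul_left 2)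
  haveI : Nonempty V := ⟨x₀⟩
  -- L² convergence
  have hL2 : Tendsto (fun k => ∑' x, g.μ x * (u (φ k) x - w x) ^ 2) atTop (𝓝 0) := by
    rw [Metric.tendsto_atTop]
    intro ε hε
    set M := 16 * (B + 1) / (lam * ε) with hM
    have hMpos : 0 < M := by positivity
    obtain ⟨R, hR⟩ := hainf M
    set H := (hball R).toFinset with hHdef
    have hlamM : lam * M = 16 * (B + 1) / ε := by
      rw [hM, mul_div_assoc']
      rw [mul_comm lam ε, ← div_div, mul_div_assoc]
      rw [mul_div_cancel_left₀ _ (ne_of_gt hlam0)]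
    have hlamMpos : 0 < lam * M := by positivity
    have htailbd : 4 * B / (lam * M) ≤ ε / 4 := by
      rw [hlamM, div_div_eq_mul_div, div_le_iff₀ (by positivity)]
      nlinarith
    have htail : ∀ (v : V → ℝ),
        (∀ s : Finset V, ∑ x ∈ s, g.μ x * ((lam * a x + 1) * (v x) ^ 2) ≤ B) →
        ∀ s : Finset V, ∑ x ∈ s.filter (fun x => ¬ x ∈ H), g.μ x * (v x) ^ 2
          ≤ B / (lam * M) := by
      intro v hv s
      have key : ∀ x ∈ s.filter (fun x => ¬ x ∈ H), g.μ x * (v x) ^ 2 ≤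
          (1 / (lam * M)) * (g.μ x * ((lam * a x + 1) * (v x) ^ 2)) := by
        intro x hx
        rw [Finset.mem_filter] at hx
        have hxH : ¬ g.G.dist x x₀ ≤ R := fun h => hx.2 ((hball R).mem_toFinset.mpr h)
        have hax : M ≤ a x := hR x (le_of_lt (lt_of_not_ge hxH))
        have h1 : lam * M ≤ lam * a x + 1 := by nlinarith
        rw [div_mul_eq_mul_div, one_mul, le_div_iff₀ hlamMpos]
        nlinarith [mul_nonneg (g.μpos x).le (sq_nonneg (v x))]
      calc ∑ x ∈ s.filter (fun x => ¬ x ∈ H), g.μ x * (v x) ^ 2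
          ≤ ∑ x ∈ s.filter (fun x => ¬ x ∈ H),
              (1 / (lam * M)) * (g.μ x * ((lam * a x + 1) * (v x) ^ 2)) :=
            Finset.sum_le_sum key
        _ = (1 / (lam * M)) * ∑ x ∈ s.filter (fun x => ¬ x ∈ H),
              g.μ x * ((lam * a x + 1) * (v x) ^ 2) := by rw [Finset.mul_sum]
        _ ≤ (1 / (lam * M)) * B :=
            mul_le_mul_of_nonneg_left (hv _) (by positivity)
        _ = B / (lam * M) := one_div_mul_eq_div _ _
    have hbound : ∀ k, ∑' x, g.μ x * (u (φ k) x - w x) ^ 2 ≤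
        (∑ x ∈ H, g.μ x * (u (φ k) x - w x) ^ 2) + 4 * B / (lam * M) := by
      intro k
      apply Summable.tsum_le_of_sum_le (hsumD (φ k))
      intro s
      rw [← Finset.sum_filter_add_sum_filter_not s (fun x => x ∈ H)]
      have e1 : ∑ x ∈ s.filter (fun x => x ∈ H), g.μ x * (u (φ k) x - w x) ^ 2 ≤
          ∑ x ∈ H, g.μ x * (u (φ k) x - w x) ^ 2 :=
        Finset.sum_le_sum_of_subset_of_nonneg
          (fun x hx => (Finset.mem_filter.mp hx).2)
          (fun x _ _ => mul_nonneg (g.μpos x).le (sq_nonneg _))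
      have e2 : ∑ x ∈ s.filter (fun x => ¬ x ∈ H), g.μ x * (u (φ k) x - w x) ^ 2
          ≤ 4 * B / (lam * M) := by
        have t1 := htail (u (φ k)) (hGB (φ k)) s
        have t2 := htail w hGBw s
        have e3 : ∀ x ∈ s.filter (fun x => ¬ x ∈ H),
            g.μ x * (u (φ k) x - w x) ^ 2 ≤
              2 * (g.μ x * (u (φ k) x) ^ 2) + 2 * (g.μ x * (w x) ^ 2) := by
          intro x _
          nlinarith [mul_nonneg (g.μpos x).le (sq_nonneg (u (φ k) x + w x))]
        calc ∑ x ∈ s.filter (fun x => ¬ x ∈ H), g.μ x * (u (φ k) x - w x) ^ 2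
            ≤ ∑ x ∈ s.filter (fun x => ¬ x ∈ H),
              (2 * (g.μ x * (u (φ k) x) ^ 2) + 2 * (g.μ x * (w x) ^ 2)) :=
              Finset.sum_le_sum e3
          _ = 2 * (∑ x ∈ s.filter (fun x => ¬ x ∈ H), g.μ x * (u (φ k) x) ^ 2)
              + 2 * (∑ x ∈ s.filter (fun x => ¬ x ∈ H), g.μ x * (w x) ^ 2) := by
              rw [Finset.sum_add_distrib, Finset.mul_sum, Finset.mul_sum]
          _ ≤ 2 * (B / (lam * M)) + 2 * (B / (lam * M)) := by
              have hBM : 0 ≤ B / (lam * M) := by positivity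
              gcongr
          _ = 4 * B / (lam * M) := by ring
      linarith
    have hheadc : Tendsto (fun k => ∑ x ∈ H, g.μ x * (u (φ k) x - w x) ^ 2)
        atTop (𝓝 0) := by
      have hterm0 : ∀ x : V, Tendsto (fun k => g.μ x * (u (φ k) x - w x) ^ 2)
          atTop (𝓝 (g.μ x * (w x - w x) ^ 2)) :=
        fun x => tendsto_const_nhds.mul (((hpt x).sub tendsto_const_nhds).pow 2)
      have := tendsto_finset_sum H (fun x _ => hterm0 x)
      simpa using this
    obtain ⟨N, hN⟩ := Metric.tendsto_atTop.mp hheadc (ε/4) (by positivity)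
    refine ⟨N, fun k hk => ?_⟩
    have h2 := hN k hk
    rw [Real.dist_eq, sub_zero] at h2 ⊢
    have hhead_nn : 0 ≤ ∑ x ∈ H, g.μ x * (u (φ k) x - w x) ^ 2 :=
      Finset.sum_nonneg (fun x _ => mul_nonneg (g.μpos x).le (sq_nonneg _))
    rw [abs_of_nonneg hhead_nn] at h2
    have hSnn : 0 ≤ ∑' x, g.μ x * (u (φ k) x - w x) ^ 2 :=
      tsum_nonneg (fun x => mul_nonneg (g.μpos x).le (sq_nonneg _))
    rw [abs_of_nonneg hSnn]
    calc ∑' x, g.μ x * (u (φ k) x - w x) ^ 2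
        ≤ (∑ x ∈ H, g.μ x * (u (φ k) x - w x) ^ 2) + 4 * B / (lam * M) := hbound k
      _ < ε/4 + ε/4 := by linarith
      _ ≤ ε := by linarith
  -- Lᑫ convergence
  have hq : ∀ q : ℝ, 2 ≤ q →
      Tendsto (fun k => ∑' x, g.μ x * |u (φ k) x - w x| ^ q) atTop (𝓝 0) := by
    intro q hq2
    have hM0nn : 0 ≤ M0 := Real.sqrt_nonneg _
    have hc0 : (0:ℝ) ≤ 2 * M0 := by linarith
    set c := (2 * M0) ^ (q - 2) with hc
    have hcnn : 0 ≤ c := Real.rpow_nonneg hc0 _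
    have htm : ∀ k x, g.μ x * |u (φ k) x - w x| ^ q ≤
        c * (g.μ x * (u (φ k) x - w x) ^ 2) := by
      intro k x
      have hd : |u (φ k) x - w x| ≤ 2 * M0 := by
        calc |u (φ k) x - w x| ≤ |u (φ k) x| + |w x| := abs_sub _ _
          _ ≤ M0 + M0 := add_le_add (hM0 _ x) (hwabs x)
          _ = 2 * M0 := by ring
      rcases eq_or_lt_of_le (abs_nonneg (u (φ k) x - w x)) with h0 | h0
      · rw [← h0, Real.zero_rpow (by linarith : q ≠ 0), mul_zero]
        have := (g.μpos x).le
        positivity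
      · have he : |u (φ k) x - w x| ^ q =
            |u (φ k) x - w x| ^ (q - 2) * |u (φ k) x - w x| ^ (2:ℝ) := by
          rw [← Real.rpow_add h0]; norm_num
        have h2 : |u (φ k) x - w x| ^ (q-2) ≤ c :=
          Real.rpow_le_rpow (abs_nonneg _) hd (by linarith)
        have h3 : 0 ≤ |u (φ k) x - w x| ^ (q-2) := Real.rpow_nonneg (abs_nonneg _) _
        rw [he, Real.rpow_two, sq_abs]
        nlinarith [(g.μpos x).le, sq_nonneg (u (φ k) x - w x),
          mul_nonneg (g.μpos x).le (sq_nonneg (u (φ k) x - w x))]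
    have hsq : ∀ k, Summable (fun x => g.μ x * |u (φ k) x - w x| ^ q) := by
      intro k
      exact Summable.of_nonneg_of_le
        (fun x => mul_nonneg (g.μpos x).le (Real.rpow_nonneg (abs_nonneg _) q))
        (htm k) ((hsumD (φ k)).mul_left c)
    refine squeeze_zero (g := fun k => c * ∑' x, g.μ x * (u (φ k) x - w x) ^ 2)
      (fun k => tsum_nonneg
        (fun x => mul_nonneg (g.μpos x).le (Real.rpow_nonneg (abs_nonneg _) q)))
      (fun k => ?_) ?_
    · calc ∑' x, g.μ x * |u (φ k) x - w x| ^ q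
          ≤ ∑' x, c * (g.μ x * (u (φ k) x - w x) ^ 2) :=
            Summable.tsum_le_tsum (htm k) (hsq k) ((hsumD (φ k)).mul_left c)
        _ = c * ∑' x, g.μ x * (u (φ k) x - w x) ^ 2 := tsum_mul_left
    · simpa using hL2.const_mul c
  -- sup convergence
  have hsup : Tendsto (fun k => ⨆ x, |u (φ k) x - w x|) atTop (𝓝 0) := by
    have hM0nn : 0 ≤ M0 := Real.sqrt_nonneg _
    have hbdd : ∀ k, BddAbove (Set.range (fun x => |u (φ k) x - w x|)) := by
      intro k
      refine ⟨2 * M0, ?_⟩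
      rintro _ ⟨x, rfl⟩
      calc |u (φ k) x - w x| ≤ |u (φ k) x| + |w x| := abs_sub _ _
        _ ≤ M0 + M0 := add_le_add (hM0 _ x) (hwabs x)
        _ = 2 * M0 := by ring
    rw [Metric.tendsto_atTop]
    intro ε hε
    set M := 8 * (B + 1) / (lam * μmin * (ε/4)^2) with hM
    have hMpos : 0 < M := by positivity
    obtain ⟨R, hR⟩ := hainf M
    have htailpt : ∀ (v : V → ℝ), (∀ x, g.μ x * ((lam * a x + 1) * (v x) ^ 2) ≤ B) →
        ∀ x, ¬ g.G.dist x x₀ ≤ R → |v x| ≤ ε / 4 := by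
      intro v hv x hx
      have hax : M ≤ a x := hR x (le_of_lt (lt_of_not_ge hx))
      have h1 : lam * M ≤ lam * a x + 1 := by nlinarith
      have hμx := g.μpos x
      have h2 : (v x) ^ 2 ≤ (ε/4) ^ 2 := by
        have h3 : μmin * (lam * M) * (v x) ^ 2 ≤ B := by
          have hlMnn : (0:ℝ) ≤ lam * M := (mul_pos hlam0 hMpos).le
          have t1 : μmin * (lam * M) * (v x) ^ 2 ≤ g.μ x * (lam * M) * (v x) ^ 2 :=
            mul_le_mul_of_nonneg_right
              (mul_le_mul_of_nonneg_right (hμ x) hlMnn) (sq_nonneg _)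
          have t2 : g.μ x * (lam * M) * (v x) ^ 2 ≤
              g.μ x * ((lam * a x + 1) * (v x) ^ 2) := by
            rw [mul_assoc]
            exact mul_le_mul_of_nonneg_left
              (mul_le_mul_of_nonneg_right h1 (sq_nonneg _)) hμx.le
          linarith [hv x]
        have hlmM : μmin * (lam * M) = 8 * (B+1) / (ε/4)^2 := by
          rw [hM]; field_simp
        rw [hlmM, div_mul_eq_mul_div, div_le_iff₀ (by positivity)] at h3
        nlinarith [sq_nonneg (ε/4)]
      calc |v x| = Real.sqrt ((v x)^2) := (Real.sqrt_sq_eq_abs _).symm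
        _ ≤ Real.sqrt ((ε/4)^2) := Real.sqrt_le_sqrt h2
        _ = ε/4 := Real.sqrt_sq (by positivity)
    have hHev : ∀ᶠ k in atTop, ∀ x ∈ (hball R).toFinset, |u (φ k) x - w x| ≤ ε/4 := by
      rw [Filter.eventually_all_finset]
      intro x _
      have ht : Tendsto (fun k => |u (φ k) x - w x|) atTop (𝓝 0) := by
        have := ((hpt x).sub (tendsto_const_nhds (x := w x))).abs
        simpa using this
      exact (ht.eventually_lt_const (by positivity : (0:ℝ) < ε/4)).mono
        (fun k hk => le_of_lt hk)
    obtain ⟨N, hN⟩ := eventually_atTop.mp hHev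
    refine ⟨N, fun k hk => ?_⟩
    rw [Real.dist_eq, sub_zero]
    have hub : ∀ x, |u (φ k) x - w x| ≤ ε/2 := by
      intro x
      by_cases hx : g.G.dist x x₀ ≤ R
      · exact le_trans (hN k hk x ((hball R).mem_toFinset.mpr hx)) (by linarith)
      · have e1 := htailpt (u (φ k)) (hterm (φ k)) x hx
        have e2 := htailpt w hGwterm x hx
        calc |u (φ k) x - w x| ≤ |u (φ k) x| + |w x| := abs_sub _ _
          _ ≤ ε/4 + ε/4 := add_le_add e1 e2
          _ = ε/2 := by ring
    have hs1 : (⨆ x, |u (φ k) x - w x|) ≤ ε/2 := ciSup_le hub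
    have hs0 : (0:ℝ) ≤ ⨆ x, |u (φ k) x - w x| :=
      le_trans (abs_nonneg _) (le_ciSup (hbdd k) x₀)
    rw [abs_of_nonneg hs0]
    linarith
  exact ⟨φ, hφ, w, hwE, hpt, hq, hsup⟩
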